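/- The tensor rank of the GHZ state |GHZ⟩ = |000⟩ + |111⟩ is exactly 2, and the tensor rank of |GHZ⟩^{⊗n} (as a tripartite tensor with each party's n qubits grouped together) is exactly 2^n. -/

import Mathlib

/-- Tensor rank of a tripartite tensor: minimum number of elementary tensors summing to it. -/
noncomputable def trank {ιA ιB ιC : Type*} (φ : ιA → ιB → ιC → ℂ) : ℕ :=
  sInf {r : ℕ | ∃ (a : Fin r → ιA → ℂ) (b : Fin r → ιB → ℂ) (c : Fin r → ιC → ℂ),
    ∀ i j k, φ i j k = ∑ l, a l i * b l j * c l k}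

/-- The rank of a diagonal tripartite tensor equals the number of diagonal entries. -/
lemma trank_diag (ι : Type*) [Fintype ι] [DecidableEq ι] :
    trank (fun i j k : ι => if i = j ∧ j = k then (1:ℂ) else 0) = Fintype.card ι := by
  set d := Fintype.card ι
  have hmem : d ∈ {r : ℕ | ∃ (a : Fin r → ι → ℂ) (b : Fin r → ι → ℂ) (c : Fin r → ι → ℂ),
      ∀ i j k, (if i = j ∧ j = k then (1:ℂ) else 0) = ∑ l, a l i * b l j * c l k} := by
    have e : Fin d ≃ ι := (Fintype.equivFin ι).symm
    refine ⟨fun l i => if i = e l then 1 else 0, fun l j => if j = e l then 1 else 0,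
      fun l k => if k = e l then 1 else 0, fun i j k => ?_⟩
    have := Equiv.sum_comp e (fun m => (if i = m then (1:ℂ) else 0) *
      (if j = m then 1 else 0) * (if k = m then 1 else 0))
    rw [this]
    simp only [mul_ite, ite_mul, mul_one, mul_zero, zero_mul, one_mul]
    rw [Finset.sum_ite_eq]
    simp only [Finset.mem_univ, if_true]
    by_cases h1 : i = j <;> by_cases h2 : j = k <;> simp_all
  refine le_antisymm (Nat.sInf_le hmem) (le_csInf ⟨d, hmem⟩ ?_)
  rintro r ⟨a, b, c, h⟩
  classical
  let w : Fin r → (ι × ι → ℂ) := fun l p => b l p.1 * c l p.2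
  let W := Submodule.span ℂ (Set.range w)
  haveI : FiniteDimensional ℂ W := FiniteDimensional.span_of_finite ℂ (Set.finite_range w)
  let f : ι → ι × ι → ℂ := fun i p => if i = p.1 ∧ p.1 = p.2 then 1 else 0
  have hfW : ∀ i, f i ∈ W := by
    intro i
    have : f i = ∑ l, a l i • w l := by
      funext p
      have := h i p.1 p.2
      simpa [f, w, mul_assoc, Finset.sum_apply] using this
    rw [this]
    exact Submodule.sum_mem _ fun l _ =>
      Submodule.smul_mem _ _ (Submodule.subset_span (Set.mem_range_self l))
  have hli : LinearIndependent ℂ f := by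
    rw [Fintype.linearIndependent_iff]
    intro g hg i
    have := congrFun hg (i, i)
    simpa [f, Finset.sum_apply, Finset.sum_ite_eq'] using this
  let f' : ι → W := fun i => ⟨f i, hfW i⟩
  have hli' : LinearIndependent ℂ f' :=
    LinearIndependent.of_comp W.subtype (by exact hli)
  calc d ≤ Module.finrank ℂ W := hli'.fintype_card_le_finrank
    _ ≤ r := by exact (finrank_range_le_card (R := ℂ) w).trans_eq (Fintype.card_fin r)

/-- The (unnormalized) GHZ state |000⟩ + |111⟩. -/
def GHZ : Fin 2 → Fin 2 → Fin 2 → ℂ :=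
  fun i j k => if i = j ∧ j = k then 1 else 0

/-- rk(GHZ) = 2 and rk(GHZ^{⊗n}) = 2^n (each party's n qubits grouped together). -/
theorem trank_GHZ_pow :
    trank GHZ = 2 ∧
    ∀ n : ℕ, trank (fun x y z : Fin n → Fin 2 => ∏ t, GHZ (x t) (y t) (z t)) = 2 ^ n := by
  constructor
  · exact (trank_diag (Fin 2)).trans (Fintype.card_fin 2)
  · intro n
    have hfun : (fun x y z : Fin n → Fin 2 => ∏ t, GHZ (x t) (y t) (z t)) =
        (fun x y z : Fin n → Fin 2 => if x = y ∧ y = z then (1:ℂ) else 0) := by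
      funext x y z
      unfold GHZ
      rw [Finset.prod_boole]
      simp only [Finset.mem_univ, true_implies]
      have hiff : (∀ t, x t = y t ∧ y t = z t) ↔ (x = y ∧ y = z) := by
        simp [funext_iff, forall_and]
      simp only [hiff]
    rw [hfun, trank_diag]
    simp
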